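/- Approximate completeness: for any labelled Markov chain (X,L,τ,l), any states x,y ∈ X, and any real δ > 0, there exists a rational ε ∈ [0,1] such that the judgment x ⊢_ε y is derivable in the derivation system and 0 ≤ bd(x,y) − ε < δ. -/
import Mathlib


/-- A finitely supported, rational-valued probability distribution on `X`. -/
structure FinDist (X : Type*) where
  p : X → ℝ
  nonneg : ∀ x, 0 ≤ p x
  rat : ∀ x, ∃ q : ℚ, (q : ℝ) = p x
  supp : Finset X
  mem_supp : ∀ x, x ∈ supp ↔ p x ≠ 0
  sum_one : ∑ x ∈ supp, p x = 1

/-- A labelled Markov chain with states `X` and labels `L`. -/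
structure LMC (X : Type*) (L : Type*) where
  τ : X → FinDist X
  label : X → L

/-- Expectation `μ ⊨ h = ∑ x, μ(x)·h(x)`. -/
noncomputable def expv {X : Type*} (μ : FinDist X) (h : X → ℝ) : ℝ :=
  ∑ z ∈ μ.supp, μ.p z * h z

/-- A `[0,1]`-valued pseudometric on `X`. -/
structure PMet (X : Type*) where
  d : X → X → ℝ
  nonneg : ∀ x y, 0 ≤ d x y
  le_one : ∀ x y, d x y ≤ 1
  refl : ∀ x, d x x = 0
  symm : ∀ x y, d x y = d y x
  triangle : ∀ x y z, d x z ≤ d x y + d y z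

open Classical in
/-- The functional `Γ` (on underlying distance functions). -/
noncomputable def GammaFun {X L : Type*} (M : LMC X L) (d : X → X → ℝ) : X → X → ℝ :=
  fun x y =>
    if M.label x ≠ M.label y then 1
    else sSup { r : ℝ | ∃ h : X → ℝ, (∀ z, h z ∈ Set.Icc (0:ℝ) 1) ∧
      (∀ u v, |h u - h v| ≤ d u v) ∧ r = expv (M.τ x) h - expv (M.τ y) h }

/-- The derivation system for lower bounds on behavioural distances. -/
inductive Deriv {X L : Type*} [DecidableEq X] (M : LMC X L) : X → ℚ → X → Prop where
  | zero (x y : X) : Deriv M x 0 y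
  | lab (x y : X) : M.label x ≠ M.label y → Deriv M x 1 y
  | symm {x y : X} {ε : ℚ} : Deriv M y ε x → Deriv M x ε y
  | weak {x y : X} {ε ε' : ℚ} : Deriv M x ε' y → 0 ≤ ε → ε ≤ ε' → Deriv M x ε y
  | exp {x y : X} {ε : ℚ} (h : X → ℚ) :
      0 ≤ ε →
      (∀ z ∈ (M.τ x).supp ∪ (M.τ y).supp, 0 ≤ h z ∧ h z ≤ 1) →
      (∀ x' ∈ (M.τ x).supp ∪ (M.τ y).supp, ∀ y' ∈ (M.τ x).supp ∪ (M.τ y).supp,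
        h y' < h x' → Deriv M x' (h x' - h y') y') →
      (ε : ℝ) ≤ expv (M.τ x) (fun z => ((h z : ℚ) : ℝ))
              - expv (M.τ y) (fun z => ((h z : ℚ) : ℝ)) →
      Deriv M x ε y

section Aux

variable {X L : Type*}

theorem expv_nonneg (μ : FinDist X) {h : X → ℝ} (hh : ∀ z ∈ μ.supp, 0 ≤ h z) :
    0 ≤ expv μ h :=
  Finset.sum_nonneg fun z hz => mul_nonneg (μ.nonneg z) (hh z hz)

theorem expv_le_one (μ : FinDist X) {h : X → ℝ} (hh : ∀ z ∈ μ.supp, h z ≤ 1) :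
    expv μ h ≤ 1 := by
  calc expv μ h ≤ ∑ z ∈ μ.supp, μ.p z * 1 :=
        Finset.sum_le_sum fun z hz => mul_le_mul_of_nonneg_left (hh z hz) (μ.nonneg z)
    _ = 1 := by simp [μ.sum_one]

theorem expv_mono (μ : FinDist X) {f g : X → ℝ} (hfg : ∀ z ∈ μ.supp, f z ≤ g z) :
    expv μ f ≤ expv μ g :=
  Finset.sum_le_sum fun z hz => mul_le_mul_of_nonneg_left (hfg z hz) (μ.nonneg z)

theorem expv_congr (μ : FinDist X) {f g : X → ℝ} (hfg : ∀ z ∈ μ.supp, f z = g z) :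
    expv μ f = expv μ g :=
  Finset.sum_congr rfl fun z hz => by rw [hfg z hz]

theorem expv_const (μ : FinDist X) (c : ℝ) : expv μ (fun _ => c) = c := by
  unfold expv
  rw [← Finset.sum_mul, μ.sum_one, one_mul]

theorem expv_smul (μ : FinDist X) (c : ℝ) (f : X → ℝ) :
    expv μ (fun z => c * f z) = c * expv μ f := by
  unfold expv
  rw [Finset.mul_sum]
  exact Finset.sum_congr rfl fun z _ => by ring

theorem expv_add_const (μ : FinDist X) (c : ℝ) (f : X → ℝ) :
    expv μ (fun z => f z + c) = expv μ f + c := by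
  unfold expv
  have : ∑ z ∈ μ.supp, μ.p z * (f z + c) = ∑ z ∈ μ.supp, (μ.p z * f z + μ.p z * c) :=
    Finset.sum_congr rfl fun z _ => by ring
  rw [this, Finset.sum_add_distrib, ← Finset.sum_mul, μ.sum_one, one_mul]

theorem expv_one_sub (μ : FinDist X) (f : X → ℝ) :
    expv μ (fun z => 1 - f z) = 1 - expv μ f := by
  have : expv μ (fun z => 1 - f z) = expv μ (fun z => (-1 : ℝ) * f z + 1) := by
    apply expv_congr; intro z _; ring
  rw [this, expv_add_const, expv_smul]; ring

/-- Every derivable bound lies in `[0,1]`. -/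
theorem Deriv.bounds [DecidableEq X] {M : LMC X L} {x y : X} {ε : ℚ}
    (d : Deriv M x ε y) : 0 ≤ ε ∧ ε ≤ 1 := by
  induction d with
  | zero => exact ⟨le_refl 0, zero_le_one⟩
  | lab => exact ⟨zero_le_one, le_refl 1⟩
  | symm _ ih => exact ih
  | weak _ h0 hle ih => exact ⟨h0, hle.trans ih.2⟩
  | @exp x' y' ε' h h0 hrange _ hexp _ =>
    refine ⟨h0, ?_⟩
    have h1 : expv (M.τ x') (fun z => ((h z : ℚ) : ℝ)) ≤ 1 :=
      expv_le_one _ fun z hz => by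
        exact_mod_cast (hrange z (Finset.mem_union_left _ hz)).2
    have h2 : 0 ≤ expv (M.τ y') (fun z => ((h z : ℚ) : ℝ)) :=
      expv_nonneg _ fun z hz => by
        exact_mod_cast (hrange z (Finset.mem_union_right _ hz)).1
    have : (ε' : ℝ) ≤ 1 := by linarith
    exact_mod_cast this

end Aux
section Gamma

variable {X L : Type*}

/-- The set whose supremum defines `Γ(d)(x,y)` when labels agree. -/
def GSet (M : LMC X L) (d : X → X → ℝ) (x y : X) : Set ℝ :=
  { r : ℝ | ∃ h : X → ℝ, (∀ z, h z ∈ Set.Icc (0:ℝ) 1) ∧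
      (∀ u v, |h u - h v| ≤ d u v) ∧ r = expv (M.τ x) h - expv (M.τ y) h }

theorem gammaFun_of_ne (M : LMC X L) (d : X → X → ℝ) {x y : X}
    (hl : M.label x ≠ M.label y) : GammaFun M d x y = 1 := by
  simp [GammaFun, hl]

theorem gammaFun_of_eq (M : LMC X L) (d : X → X → ℝ) {x y : X}
    (hl : M.label x = M.label y) : GammaFun M d x y = sSup (GSet M d x y) := by
  simp [GammaFun, hl, GSet]

theorem GSet_le_one (M : LMC X L) (d : X → X → ℝ) (x y : X) :
    ∀ r ∈ GSet M d x y, r ≤ 1 := by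
  rintro r ⟨h, hr, _, rfl⟩
  have h1 : expv (M.τ x) h ≤ 1 := expv_le_one _ fun z _ => (hr z).2
  have h2 : 0 ≤ expv (M.τ y) h := expv_nonneg _ fun z _ => (hr z).1
  linarith

theorem GSet_bddAbove (M : LMC X L) (d : X → X → ℝ) (x y : X) :
    BddAbove (GSet M d x y) := ⟨1, fun r hr => GSet_le_one M d x y r hr⟩

theorem GSet_neg_mem (M : LMC X L) (d : X → X → ℝ) {x y : X} {r : ℝ}
    (hr : r ∈ GSet M d x y) : -r ∈ GSet M d x y := by
  obtain ⟨h, hmem, hne, rfl⟩ := hr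
  refine ⟨fun z => 1 - h z, fun z => ⟨show (0:ℝ) ≤ 1 - h z by linarith [(hmem z).2], show (1:ℝ) - h z ≤ 1 by linarith [(hmem z).1]⟩,
    fun u v => ?_, ?_⟩
  · have := hne u v
    rw [show (1 - h u) - (1 - h v) = -(h u - h v) by ring, abs_neg]
    exact this
  · rw [expv_one_sub, expv_one_sub]; ring

theorem GSet_swap_mem (M : LMC X L) (d : X → X → ℝ) {x y : X} {r : ℝ}
    (hr : r ∈ GSet M d x y) : r ∈ GSet M d y x := by
  obtain ⟨h, hmem, hne, rfl⟩ := hr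
  have : -(expv (M.τ x) h - expv (M.τ y) h) ∈ GSet M d y x :=
    ⟨h, hmem, hne, by ring⟩
  simpa using GSet_neg_mem M d this

theorem gammaFun_nonneg (M : LMC X L) (d : X → X → ℝ) (x y : X) :
    0 ≤ GammaFun M d x y := by
  by_cases hl : M.label x = M.label y
  · rw [gammaFun_of_eq M d hl]
    rcases Set.eq_empty_or_nonempty (GSet M d x y) with he | ⟨r, hr⟩
    · rw [he, Real.sSup_empty]
    · rcases le_total 0 r with h0 | h0
      · exact h0.trans (le_csSup (GSet_bddAbove M d x y) hr)
      · have : 0 ≤ -r := by linarith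
        exact this.trans (le_csSup (GSet_bddAbove M d x y) (GSet_neg_mem M d hr))
  · rw [gammaFun_of_ne M d hl]; exact zero_le_one

theorem gammaFun_le_one (M : LMC X L) (d : X → X → ℝ) (x y : X) :
    GammaFun M d x y ≤ 1 := by
  by_cases hl : M.label x = M.label y
  · rw [gammaFun_of_eq M d hl]
    rcases Set.eq_empty_or_nonempty (GSet M d x y) with he | hne
    · rw [he, Real.sSup_empty]; exact zero_le_one
    · exact csSup_le hne (GSet_le_one M d x y)
  · rw [gammaFun_of_ne M d hl]

theorem gammaFun_mono (M : LMC X L) {d d' : X → X → ℝ}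
    (hdd : ∀ u v, d u v ≤ d' u v) (x y : X) :
    GammaFun M d x y ≤ GammaFun M d' x y := by
  by_cases hl : M.label x = M.label y
  · rw [gammaFun_of_eq M d hl, gammaFun_of_eq M d' hl]
    rcases Set.eq_empty_or_nonempty (GSet M d x y) with he | hne
    · rw [he, Real.sSup_empty]
      calc (0:ℝ) = 0 := rfl
        _ ≤ GammaFun M d' x y := gammaFun_nonneg M d' x y
        _ = sSup (GSet M d' x y) := gammaFun_of_eq M d' hl
    · apply csSup_le_csSup (GSet_bddAbove M d' x y) hne
      rintro r ⟨h, hmem, hnexp, rfl⟩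
      exact ⟨h, hmem, fun u v => (hnexp u v).trans (hdd u v), rfl⟩
  · rw [gammaFun_of_ne M d hl, gammaFun_of_ne M d' hl]

end Gamma
section GammaPMet

variable {X L : Type*}

theorem gammaFun_refl (M : LMC X L) (p : PMet X) (x : X) :
    GammaFun M p.d x x = 0 := by
  rw [gammaFun_of_eq M p.d rfl]
  have : GSet M p.d x x = {0} := by
    apply Set.eq_singleton_iff_unique_mem.mpr
    constructor
    · exact ⟨fun _ => 0, fun z => ⟨le_refl 0, zero_le_one⟩,
        fun u v => by simpa using p.nonneg u v, by ring⟩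
    · rintro r ⟨h, _, _, rfl⟩; ring
  rw [this, csSup_singleton]

theorem gammaFun_symm (M : LMC X L) (d : X → X → ℝ) (x y : X) :
    GammaFun M d x y = GammaFun M d y x := by
  by_cases hl : M.label x = M.label y
  · rw [gammaFun_of_eq M d hl, gammaFun_of_eq M d hl.symm]
    congr 1
    ext r
    exact ⟨fun hr => GSet_swap_mem M d hr, fun hr => GSet_swap_mem M d hr⟩
  · rw [gammaFun_of_ne M d hl, gammaFun_of_ne M d (Ne.symm hl)]

theorem gammaFun_triangle (M : LMC X L) (d : X → X → ℝ) (x y z : X) :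
    GammaFun M d x z ≤ GammaFun M d x y + GammaFun M d y z := by
  by_cases hxz : M.label x = M.label z
  · rw [gammaFun_of_eq M d hxz]
    rcases Set.eq_empty_or_nonempty (GSet M d x z) with he | hne
    · rw [he, Real.sSup_empty]
      exact add_nonneg (gammaFun_nonneg M d x y) (gammaFun_nonneg M d y z)
    · apply csSup_le hne
      rintro r ⟨h, hmem, hnexp, rfl⟩
      have hxy : expv (M.τ x) h - expv (M.τ y) h ≤ GammaFun M d x y := by
        by_cases hl : M.label x = M.label y
        · rw [gammaFun_of_eq M d hl]
          exact le_csSup (GSet_bddAbove M d x y) ⟨h, hmem, hnexp, rfl⟩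
        · rw [gammaFun_of_ne M d hl]
          have h1 : expv (M.τ x) h ≤ 1 := expv_le_one _ fun w _ => (hmem w).2
          have h2 : 0 ≤ expv (M.τ y) h := expv_nonneg _ fun w _ => (hmem w).1
          linarith
      have hyz : expv (M.τ y) h - expv (M.τ z) h ≤ GammaFun M d y z := by
        by_cases hl : M.label y = M.label z
        · rw [gammaFun_of_eq M d hl]
          exact le_csSup (GSet_bddAbove M d y z) ⟨h, hmem, hnexp, rfl⟩
        · rw [gammaFun_of_ne M d hl]
          have h1 : expv (M.τ y) h ≤ 1 := expv_le_one _ fun w _ => (hmem w).2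
          have h2 : 0 ≤ expv (M.τ z) h := expv_nonneg _ fun w _ => (hmem w).1
          linarith
      linarith
  · rw [gammaFun_of_ne M d hxz]
    by_cases hxy : M.label x = M.label y
    · have hyz : M.label y ≠ M.label z := fun hc => hxz (hxy.trans hc)
      rw [gammaFun_of_ne M d hyz]
      linarith [gammaFun_nonneg M d x y]
    · rw [gammaFun_of_ne M d hxy]
      linarith [gammaFun_nonneg M d y z]

/-- `Γ` maps pseudometrics to pseudometrics. -/
noncomputable def GammaPMet (M : LMC X L) (p : PMet X) : PMet X where
  d := GammaFun M p.d
  nonneg := gammaFun_nonneg M p.d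
  le_one := gammaFun_le_one M p.d
  refl := gammaFun_refl M p
  symm := gammaFun_symm M p.d
  triangle := gammaFun_triangle M p.d

end GammaPMet
section KT

variable {X L : Type*}

/-- A function is a pre-fixed point of `Γ`. -/
def Prefixed (M : LMC X L) (q : X → X → ℝ) : Prop :=
  ∀ u v, GammaFun M q u v ≤ q u v

theorem Prefixed.nonneg {M : LMC X L} {q : X → X → ℝ} (hq : Prefixed M q) (u v : X) :
    0 ≤ q u v := (gammaFun_nonneg M q u v).trans (hq u v)

/-- The family of pseudometrics below every pre-fixed point. -/
def LowerFam (M : LMC X L) : Set (X → X → ℝ) :=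
  { f | (∃ p : PMet X, p.d = f) ∧
        ∀ q : X → X → ℝ, Prefixed M q → ∀ u v, f u v ≤ q u v }

theorem zero_mem_LowerFam (M : LMC X L) : (fun (_ _ : X) => (0:ℝ)) ∈ LowerFam M :=
  ⟨⟨⟨fun _ _ => 0, fun _ _ => le_refl 0, fun _ _ => zero_le_one, fun _ => rfl,
      fun _ _ => rfl, fun _ _ _ => by simp⟩, rfl⟩,
    fun q hq u v => hq.nonneg u v⟩

/-- Pointwise supremum of the family: the least fixed point candidate. -/
noncomputable def ktFun (M : LMC X L) : X → X → ℝ :=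
  fun u v => sSup { r : ℝ | ∃ f ∈ LowerFam M, r = f u v }

theorem ktSet_nonempty (M : LMC X L) (u v : X) :
    Set.Nonempty { r : ℝ | ∃ f ∈ LowerFam M, r = f u v } :=
  ⟨0, fun _ _ => 0, zero_mem_LowerFam M, rfl⟩

theorem ktSet_bddAbove (M : LMC X L) (u v : X) :
    BddAbove { r : ℝ | ∃ f ∈ LowerFam M, r = f u v } := by
  refine ⟨1, ?_⟩
  rintro r ⟨f, ⟨⟨p, rfl⟩, _⟩, rfl⟩
  exact p.le_one u v

theorem le_ktFun (M : LMC X L) {f : X → X → ℝ} (hf : f ∈ LowerFam M) (u v : X) :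
    f u v ≤ ktFun M u v :=
  le_csSup (ktSet_bddAbove M u v) ⟨f, hf, rfl⟩

theorem ktFun_le (M : LMC X L) {q : X → X → ℝ} (hq : Prefixed M q) (u v : X) :
    ktFun M u v ≤ q u v := by
  apply csSup_le (ktSet_nonempty M u v)
  rintro r ⟨f, ⟨_, hle⟩, rfl⟩
  exact hle q hq u v

/-- `ktFun` packaged as a pseudometric. -/
noncomputable def ktPMet (M : LMC X L) : PMet X where
  d := ktFun M
  nonneg := fun u v => le_csSup (ktSet_bddAbove M u v) ⟨fun _ _ => 0, zero_mem_LowerFam M, rfl⟩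
  le_one := fun u v => csSup_le (ktSet_nonempty M u v)
    (by rintro r ⟨f, ⟨⟨p, rfl⟩, _⟩, rfl⟩; exact p.le_one u v)
  refl := fun u => le_antisymm
    (csSup_le (ktSet_nonempty M u u)
      (by rintro r ⟨f, ⟨⟨p, rfl⟩, _⟩, rfl⟩; exact le_of_eq (p.refl u)))
    (le_csSup (ktSet_bddAbove M u u) ⟨fun _ _ => 0, zero_mem_LowerFam M, rfl⟩)
  symm := by
    have key : ∀ u v : X, ktFun M u v ≤ ktFun M v u := by
      intro u v
      apply csSup_le (ktSet_nonempty M u v)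
      rintro r ⟨f, hf, rfl⟩
      obtain ⟨⟨p, rfl⟩, hle⟩ := hf
      rw [p.symm u v]
      exact le_ktFun M ⟨⟨p, rfl⟩, hle⟩ v u
    exact fun u v => le_antisymm (key u v) (key v u)
  triangle := by
    intro u v w
    apply csSup_le (ktSet_nonempty M u w)
    rintro r ⟨f, hf, rfl⟩
    obtain ⟨⟨p, rfl⟩, hle⟩ := hf
    calc p.d u w ≤ p.d u v + p.d v w := p.triangle u v w
      _ ≤ ktFun M u v + ktFun M v w :=
          add_le_add (le_ktFun M ⟨⟨p, rfl⟩, hle⟩ u v) (le_ktFun M ⟨⟨p, rfl⟩, hle⟩ v w)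

/-- `ktFun` is a fixed point of `Γ`. -/
theorem ktFun_fixed (M : LMC X L) : ∀ u v, GammaFun M (ktFun M) u v = ktFun M u v := by
  have hGamma_mem : GammaFun M (ktFun M) ∈ LowerFam M := by
    refine ⟨⟨GammaPMet M (ktPMet M), rfl⟩, ?_⟩
    intro q hq u v
    calc GammaFun M (ktFun M) u v ≤ GammaFun M q u v :=
          gammaFun_mono M (fun a b => ktFun_le M hq a b) u v
      _ ≤ q u v := hq u v
  have hpre : Prefixed M (ktFun M) := fun u v => le_ktFun M hGamma_mem u v
  intro u v
  apply le_antisymm (hpre u v)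
  -- e ≤ Γ(e) since Γ(e) is itself pre-fixed
  have hpre2 : Prefixed M (GammaFun M (ktFun M)) := by
    intro a b
    exact gammaFun_mono M (fun s t => hpre s t) a b
  apply csSup_le (ktSet_nonempty M u v)
  rintro r ⟨f, hf, rfl⟩
  exact hf.2 _ hpre2 u v

end KT
section Sound

variable {X L : Type*}

theorem FinDist.supp_nonempty (μ : FinDist X) : μ.supp.Nonempty := by
  by_contra h
  rw [Finset.not_nonempty_iff_eq_empty] at h
  have := μ.sum_one
  rw [h] at this
  simp at this

/-- Soundness: every derivable lower bound is below the behavioural distance. -/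
theorem deriv_sound [DecidableEq X] {M : LMC X L} (bd : PMet X)
    (hfix : ∀ x y, GammaFun M bd.d x y = bd.d x y)
    {x y : X} {ε : ℚ} (der : Deriv M x ε y) : (ε : ℝ) ≤ bd.d x y := by
  induction der with
  | zero a b => exact_mod_cast bd.nonneg a b
  | lab a b hl =>
    rw [← hfix a b, gammaFun_of_ne M bd.d hl]; norm_num
  | @symm a b _ _ ih => rw [bd.symm a b]; exact_mod_cast ih
  | @weak a b e e' _ h0 hle ih =>
    calc ((e : ℝ)) ≤ (e' : ℝ) := by exact_mod_cast hle
      _ ≤ bd.d a b := ih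
  | @exp a b e h h0 hrange hder hexp ih =>
    set S := (M.τ a).supp ∪ (M.τ b).supp with hS
    have hSne : S.Nonempty := ((M.τ a).supp_nonempty).mono Finset.subset_union_left
    -- McShane extension of h from S to X
    set F : X → ℝ := fun z => S.inf' hSne (fun s => ((h s : ℚ) : ℝ) + bd.d z s) with hF
    set H : X → ℝ := fun z => min 1 (F z) with hH
    have hF_nonneg : ∀ z, 0 ≤ F z := by
      intro z
      apply (Finset.le_inf'_iff hSne _).mpr
      intro s hs
      have := (hrange s hs).1
      have : (0:ℝ) ≤ (h s : ℝ) := by exact_mod_cast this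
      linarith [bd.nonneg z s]
    have hH_mem : ∀ z, H z ∈ Set.Icc (0:ℝ) 1 :=
      fun z => ⟨le_min zero_le_one (hF_nonneg z), min_le_left _ _⟩
    -- H agrees with h on S
    have hHeq : ∀ s ∈ S, H s = ((h s : ℚ) : ℝ) := by
      intro s hs
      have hs1 : (h s : ℝ) ≤ 1 := by exact_mod_cast (hrange s hs).2
      have hs0 : (0:ℝ) ≤ (h s : ℝ) := by exact_mod_cast (hrange s hs).1
      have hub : F s ≤ (h s : ℝ) := by
        have := Finset.inf'_le (b := s) (fun t => ((h t : ℚ) : ℝ) + bd.d s t) hs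
        rwa [bd.refl s, add_zero] at this
      have hlb : (h s : ℝ) ≤ F s := by
        apply (Finset.le_inf'_iff hSne _).mpr
        intro t ht
        rcases le_or_gt (h s) (h t) with hc | hc
        · have : (h s : ℝ) ≤ (h t : ℝ) := by exact_mod_cast hc
          linarith [bd.nonneg s t]
        · have := ih s hs t ht hc
          have : ((h s - h t : ℚ) : ℝ) ≤ bd.d s t := this
          push_cast at this
          linarith
      have : F s = (h s : ℝ) := le_antisymm hub hlb
      rw [hH]
      simp only []
      rw [this, min_eq_right hs1]
    -- H is nonexpansive w.r.t. bd
    have hHne : ∀ u v, |H u - H v| ≤ bd.d u v := by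
      have key : ∀ u v, H u - H v ≤ bd.d u v := by
        intro u v
        rcases le_or_gt 1 (F v) with hc | hc
        · have : H v = 1 := min_eq_left hc
          rw [this]
          have : H u ≤ 1 := (hH_mem u).2
          linarith [bd.nonneg u v]
        · have hv : H v = F v := min_eq_right hc.le
          obtain ⟨s, hsS, hsmin⟩ := Finset.exists_mem_eq_inf' hSne
            (fun t => ((h t : ℚ) : ℝ) + bd.d v t)
          have hFu : F u ≤ (h s : ℝ) + bd.d u s :=
            Finset.inf'_le _ hsS
          have : F u ≤ F v + bd.d u v := by
            have hFv : F v = (h s : ℝ) + bd.d v s := hsmin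
            have htri := bd.triangle u v s
            rw [hFv]
            linarith
          have hHu : H u ≤ F u := min_le_right _ _
          rw [hv]
          linarith
      intro u v
      rw [abs_le]
      constructor
      · have := key v u
        rw [bd.symm v u] at this
        linarith
      · exact key u v
    -- conclude
    have hex : expv (M.τ a) H - expv (M.τ b) H
        = expv (M.τ a) (fun z => ((h z : ℚ) : ℝ)) - expv (M.τ b) (fun z => ((h z : ℚ) : ℝ)) := by
      rw [expv_congr (M.τ a) (fun z hz => hHeq z (Finset.mem_union_left _ hz)),
        expv_congr (M.τ b) (fun z hz => hHeq z (Finset.mem_union_right _ hz))]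
    by_cases hl : M.label a = M.label b
    · rw [← hfix a b, gammaFun_of_eq M bd.d hl]
      refine le_trans ?_ (le_csSup (GSet_bddAbove M bd.d a b) ⟨H, hH_mem, hHne, rfl⟩)
      rw [hex]
      exact hexp
    · rw [← hfix a b, gammaFun_of_ne M bd.d hl]
      have h1 : expv (M.τ a) (fun z => ((h z : ℚ) : ℝ)) ≤ 1 :=
        expv_le_one _ fun z hz => by exact_mod_cast (hrange z (Finset.mem_union_left _ hz)).2
      have h2 : 0 ≤ expv (M.τ b) (fun z => ((h z : ℚ) : ℝ)) :=
        expv_nonneg _ fun z hz => by exact_mod_cast (hrange z (Finset.mem_union_right _ hz)).1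
      linarith
end Sound
section DStar

variable {X L : Type*} [DecidableEq X]

/-- The set of (real values of) derivable lower bounds between two states. -/
def DSet (M : LMC X L) (u v : X) : Set ℝ :=
  { r : ℝ | ∃ ε : ℚ, Deriv M u ε v ∧ r = (ε : ℝ) }

/-- Supremum of derivable lower bounds. -/
noncomputable def dstar (M : LMC X L) : X → X → ℝ :=
  fun u v => sSup (DSet M u v)

theorem DSet.zero_mem (M : LMC X L) (u v : X) : (0:ℝ) ∈ DSet M u v :=
  ⟨0, Deriv.zero u v, by norm_num⟩

theorem DSet.nonempty (M : LMC X L) (u v : X) : (DSet M u v).Nonempty :=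
  ⟨0, DSet.zero_mem M u v⟩

theorem DSet.bddAbove (M : LMC X L) (u v : X) : BddAbove (DSet M u v) := by
  refine ⟨1, ?_⟩
  rintro r ⟨ε, hd, rfl⟩
  exact_mod_cast hd.bounds.2

theorem dstar_nonneg (M : LMC X L) (u v : X) : 0 ≤ dstar M u v :=
  le_csSup (DSet.bddAbove M u v) (DSet.zero_mem M u v)

theorem deriv_le_dstar (M : LMC X L) {u v : X} {ε : ℚ} (hd : Deriv M u ε v) :
    (ε : ℝ) ≤ dstar M u v :=
  le_csSup (DSet.bddAbove M u v) ⟨ε, hd, rfl⟩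

theorem exists_deriv_gt (M : LMC X L) {u v : X} {c : ℝ} (hc : c < dstar M u v) :
    ∃ ε : ℚ, Deriv M u ε v ∧ c < (ε : ℝ) := by
  obtain ⟨r, ⟨ε, hd, rfl⟩, hgt⟩ := exists_lt_of_lt_csSup (DSet.nonempty M u v) hc
  exact ⟨ε, hd, hgt⟩

/-- Key lemma: `dstar` is a pre-fixed point of `Γ`. -/
theorem dstar_prefixed (M : LMC X L) : Prefixed M (dstar M) := by
  intro x y
  by_cases hl : M.label x = M.label y
  · rw [gammaFun_of_eq M _ hl]
    rcases Set.eq_empty_or_nonempty (GSet M (dstar M) x y) with he | hne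
    · rw [he, Real.sSup_empty]; exact dstar_nonneg M x y
    · apply csSup_le hne
      rintro r ⟨h, hmem, hnexp, rfl⟩
      set r : ℝ := expv (M.τ x) h - expv (M.τ y) h with hrdef
      apply le_of_forall_pos_le_add
      intro η hη
      rcases lt_or_ge r η with hcase | hcase
      · linarith [dstar_nonneg M x y]
      have hrη : 0 ≤ r - η := by linarith
      -- choose a small rational θ
      obtain ⟨θ, hθ0, hθm⟩ := exists_rat_btwn (show (0:ℝ) < min (η/2) 1 by positivity)
      have hθpos : 0 < θ := by exact_mod_cast hθ0
      have hθη : (θ:ℝ) < η/2 := lt_of_lt_of_le hθm (min_le_left _ _)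
      have hθ1 : (θ:ℝ) < 1 := lt_of_lt_of_le hθm (min_le_right _ _)
      -- the finite support set and the minimal positive distance
      set S : Finset X := (M.τ x).supp ∪ (M.τ y).supp with hSdef
      set T : Finset (X × X) := (S ×ˢ S).filter (fun p => 0 < dstar M p.1 p.2) with hTdef
      set m : ℝ := if hT : T.Nonempty then T.inf' hT (fun p => dstar M p.1 p.2) else 1 with hmdef
      have hm_pos : 0 < m := by
        rw [hmdef]
        split_ifs with hT
        · rw [Finset.lt_inf'_iff]
          intro p hp
          exact (Finset.mem_filter.mp hp).2
        · norm_num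
      have hm_le : ∀ u v : X, u ∈ S → v ∈ S → 0 < dstar M u v → m ≤ dstar M u v := by
        intro u v hu hv hpos
        have hmem' : (u, v) ∈ T := Finset.mem_filter.mpr ⟨Finset.mem_product.mpr ⟨hu, hv⟩, hpos⟩
        rw [hmdef]
        rw [dif_pos ⟨(u,v), hmem'⟩]
        exact Finset.inf'_le _ hmem'
      set μm : ℝ := min m 1 with hμmdef
      have hμm_pos : 0 < μm := lt_min hm_pos one_pos
      have hμm_le_one : μm ≤ 1 := min_le_right _ _
      set β : ℝ := (θ:ℝ) * μm / 4 with hβdef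
      have hβ_pos : 0 < β := by positivity
      have hβ_le : β ≤ (θ:ℝ)/4 := by
        rw [hβdef]
        have : (θ:ℝ) * μm ≤ (θ:ℝ) * 1 := by
          apply mul_le_mul_of_nonneg_left hμm_le_one (by positivity)
        linarith
      -- the rational approximation of (1-θ)·h
      have hGex : ∀ a : ℝ, (1-(θ:ℝ))*a < (1-(θ:ℝ))*a + β := fun a => lt_add_of_pos_right _ hβ_pos
      set G : ℝ → ℚ := fun a => (exists_rat_btwn (hGex a)).choose with hGdef
      have hGspec : ∀ a : ℝ, (1-(θ:ℝ))*a < (G a : ℝ) ∧ ((G a : ℝ)) < (1-(θ:ℝ))*a + β :=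
        fun a => (exists_rat_btwn (hGex a)).choose_spec
      set g : X → ℚ := fun z => G (h z) with hgdef
      have hg_lb : ∀ z, (1-(θ:ℝ)) * h z < (g z : ℝ) := fun z => (hGspec (h z)).1
      have hg_ub : ∀ z, (g z : ℝ) < (1-(θ:ℝ)) * h z + β := fun z => (hGspec (h z)).2
      -- range of g
      have hgrange : ∀ z ∈ S, 0 ≤ g z ∧ g z ≤ 1 := by
        intro z _
        constructor
        · have : (0:ℝ) ≤ (g z : ℝ) := by
            have h1 := (hmem z).1
            have := hg_lb z
            nlinarith [hθ1.le]
          exact_mod_cast this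
        · have : (g z : ℝ) ≤ 1 := by
            have h2 := (hmem z).2
            have := hg_ub z
            nlinarith [hθpos, hβ_le]
          exact_mod_cast this
      -- derivability of the differences
      have hder : ∀ u ∈ S, ∀ v ∈ S, g v < g u → Deriv M u (g u - g v) v := by
        intro u hu v hv hgt
        have habs := hnexp u v
        have hds_pos : 0 < dstar M u v := by
          rcases lt_or_ge 0 (dstar M u v) with hp | hp
          · exact hp
          · exfalso
            have h0 : dstar M u v = 0 := le_antisymm hp (dstar_nonneg M u v)
            rw [h0] at habs
            have : h u = h v := by
              have := abs_nonpos_iff.mp habs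
              linarith [sub_eq_zero.mp this]
            have : g u = g v := by rw [hgdef]; simp only []; rw [this]
            exact (ne_of_gt hgt) this
        have hμm_le : μm ≤ dstar M u v := le_trans (min_le_left _ _) (hm_le u v hu hv hds_pos)
        have hβd : β ≤ (θ:ℝ) * dstar M u v / 4 := by
          rw [hβdef]
          have : (θ:ℝ) * μm ≤ (θ:ℝ) * dstar M u v :=
            mul_le_mul_of_nonneg_left hμm_le (by positivity)
          linarith
        have habs' : h u - h v ≤ dstar M u v := (abs_le.mp habs).2
        have key : ((g u : ℝ) - (g v : ℝ)) ≤ (1 - (θ:ℝ)/2) * dstar M u v := by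
          have h1 := hg_ub u
          have h2 := hg_lb v
          rcases le_total (h v) (h u) with hc | hc
          · nlinarith [hθpos, hθ1.le]
          · nlinarith [hθpos, hθ1.le]
        have hlt : ((g u - g v : ℚ) : ℝ) < dstar M u v := by
          push_cast
          have : (1 - (θ:ℝ)/2) * dstar M u v < dstar M u v := by nlinarith [hθpos]
          linarith [key]
        obtain ⟨ε', hd', hgt'⟩ := exists_deriv_gt M hlt
        apply Deriv.weak hd'
        · linarith [hgt.le]
        · exact_mod_cast hgt'.le
      -- expectation bounds
      have hEx : (1-(θ:ℝ)) * expv (M.τ x) h ≤ expv (M.τ x) (fun z => ((g z : ℚ) : ℝ)) := by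
        rw [← expv_smul]
        exact expv_mono _ fun z _ => (hg_lb z).le
      have hEy : expv (M.τ y) (fun z => ((g z : ℚ) : ℝ)) ≤ (1-(θ:ℝ)) * expv (M.τ y) h + β := by
        have := expv_mono (M.τ y) (f := fun z => ((g z : ℚ) : ℝ))
          (g := fun z => (1-(θ:ℝ)) * h z + β) (fun z _ => (hg_ub z).le)
        rwa [expv_add_const, expv_smul] at this
      have hr_le_one : r ≤ 1 := by
        have h1 : expv (M.τ x) h ≤ 1 := expv_le_one _ fun z _ => (hmem z).2
        have h2 : 0 ≤ expv (M.τ y) h := expv_nonneg _ fun z _ => (hmem z).1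
        rw [hrdef]; linarith
      have hab : r - η < (1-(θ:ℝ))*r - β := by nlinarith [hθη, hβ_le, hθpos]
      obtain ⟨ε, hε1, hε2⟩ := exists_rat_btwn hab
      have hε_nonneg : 0 ≤ ε := by
        have : (0:ℝ) ≤ (ε:ℝ) := le_trans hrη hε1.le
        exact_mod_cast this
      have hεd : Deriv M x ε y := by
        apply Deriv.exp g hε_nonneg hgrange hder
        have : (1-(θ:ℝ))*r - β ≤ expv (M.τ x) (fun z => ((g z : ℚ) : ℝ))
            - expv (M.τ y) (fun z => ((g z : ℚ) : ℝ)) := by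
          rw [hrdef]
          have hexpand : (1-(θ:ℝ))*(expv (M.τ x) h - expv (M.τ y) h)
              = (1-(θ:ℝ))*expv (M.τ x) h - (1-(θ:ℝ))*expv (M.τ y) h := by ring
          linarith [hEx, hEy]
        linarith [hε2.le]
      have := deriv_le_dstar M hεd
      linarith [hε1]
  · rw [gammaFun_of_ne M _ hl]
    exact deriv_le_dstar M (Deriv.lab x y hl) |>.trans_eq' (by norm_num)

end DStar
/-- Approximate completeness: lower bounds can be derived with arbitrarily small
error w.r.t. the behavioural distance. -/
theorem approximate_completeness {X L : Type*} [DecidableEq X] [Nonempty L]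
    (M : LMC X L) (bd : PMet X)
    (hfix : ∀ x y, GammaFun M bd.d x y = bd.d x y)
    (hleast : ∀ d : PMet X, (∀ x y, GammaFun M d.d x y = d.d x y) →
      ∀ x y, bd.d x y ≤ d.d x y)
    (x y : X) (δ : ℝ) (hδ : 0 < δ) :
    ∃ ε : ℚ, 0 ≤ ε ∧ ε ≤ 1 ∧ Deriv M x ε y ∧
      0 ≤ bd.d x y - (ε : ℝ) ∧ bd.d x y - (ε : ℝ) < δ := by
  -- bd is below the Knaster–Tarski least fixed point, which is below dstar
  have h1 : bd.d x y ≤ ktFun M x y := hleast (ktPMet M) (ktFun_fixed M) x y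
  have h2 : ktFun M x y ≤ dstar M x y := ktFun_le M (dstar_prefixed M) x y
  -- soundness: dstar ≤ bd
  have h3 : dstar M x y ≤ bd.d x y :=
    csSup_le (DSet.nonempty M x y) (by rintro r ⟨ε, hd, rfl⟩; exact deriv_sound bd hfix hd)
  have heq : dstar M x y = bd.d x y := le_antisymm h3 (h1.trans h2)
  have hlt : bd.d x y - δ < dstar M x y := by rw [heq]; linarith
  obtain ⟨ε, hd, hgt⟩ := exists_deriv_gt M hlt
  have hsound := deriv_sound bd hfix hd
  exact ⟨ε, hd.bounds.1, hd.bounds.2, hd, by linarith, by linarith⟩
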